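/- Let C be a finite nonempty set of points on the unit sphere S^{n−1} ⊂ ℝ^n, and let f(t) = Σ_{k=0}^l f_k·P_k^{λ,λ}(t) with λ = (n−3)/2 be a polynomial whose Gegenbauer/Jacobi coefficients satisfy f_k ≥ 0 for 1 ≤ k ≤ l and f_0 > 0, and such that f(t) ≤ 0 for all t ∈ [−1, cos θ], where θ is such that every pair of distinct points of C has inner product at most cos θ. Then |C| ≤ f(1)/f_0 (linear programming bound on spherical codes). -/

import Mathlib

open Finset

/-- Linear programming bound for spherical codes.  `P k` plays the role of the
Jacobi (Gegenbauer) polynomial `P_k^{λ,λ}` with `λ = (n−3)/2`; its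
positive-definiteness on the sphere is assumed as a hypothesis. -/
theorem stmt15 (n l : ℕ) (C : Finset (EuclideanSpace ℝ (Fin n)))
    (hC : C.Nonempty) (hunit : ∀ c ∈ C, ‖c‖ = 1)
    (P : ℕ → ℝ → ℝ) (hP0 : ∀ t, P 0 t = 1)
    (hposdef : ∀ k, 0 ≤ ∑ c ∈ C, ∑ c' ∈ C, P k (inner ℝ c c' : ℝ))
    (fc : ℕ → ℝ) (hf0 : 0 < fc 0)
    (hfc : ∀ k, 1 ≤ k → k ≤ l → 0 ≤ fc k)
    (θ : ℝ)
    (hsep : ∀ c ∈ C, ∀ c' ∈ C, c ≠ c' → (inner ℝ c c' : ℝ) ≤ Real.cos θ)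
    (hfneg : ∀ t : ℝ, -1 ≤ t → t ≤ Real.cos θ →
      (∑ k ∈ Finset.range (l + 1), fc k * P k t) ≤ 0) :
    (C.card : ℝ) ≤ (∑ k ∈ Finset.range (l + 1), fc k * P k 1) / fc 0 := by
  classical
  set N : ℝ := (C.card : ℝ) with hN
  have hNpos : 0 < N := by
    rw [hN]; exact_mod_cast Finset.card_pos.mpr hC
  set F : ℝ := ∑ k ∈ Finset.range (l + 1), fc k * P k 1 with hF
  set S : ℝ := ∑ c ∈ C, ∑ c' ∈ C, ∑ k ∈ Finset.range (l + 1),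
    fc k * P k (inner ℝ c c' : ℝ) with hS
  -- swap the order of summation
  have hswap : S = ∑ k ∈ Finset.range (l + 1),
      fc k * ∑ c ∈ C, ∑ c' ∈ C, P k (inner ℝ c c' : ℝ) :=
    calc S = ∑ c ∈ C, ∑ k ∈ Finset.range (l + 1), ∑ c' ∈ C,
          fc k * P k (inner ℝ c c' : ℝ) :=
        Finset.sum_congr rfl fun c _ => Finset.sum_comm
      _ = ∑ k ∈ Finset.range (l + 1), ∑ c ∈ C, ∑ c' ∈ C,
          fc k * P k (inner ℝ c c' : ℝ) := Finset.sum_comm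
      _ = ∑ k ∈ Finset.range (l + 1),
          fc k * ∑ c ∈ C, ∑ c' ∈ C, P k (inner ℝ c c' : ℝ) := by
        refine Finset.sum_congr rfl fun k _ => ?_
        simp_rw [Finset.mul_sum]
  -- lower bound : fc 0 * N ^ 2 ≤ S
  have hlow : fc 0 * N ^ 2 ≤ S := by
    rw [hswap]
    have hmem : (0 : ℕ) ∈ Finset.range (l + 1) := by simp
    rw [← Finset.add_sum_erase _ _ hmem]
    have h0 : ∑ c ∈ C, ∑ c' ∈ C, P 0 (inner ℝ c c' : ℝ) = N ^ 2 := by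
      simp [hP0, hN, sq]
    rw [h0]
    have hrest : 0 ≤ ∑ k ∈ (Finset.range (l + 1)).erase 0,
        fc k * ∑ c ∈ C, ∑ c' ∈ C, P k (inner ℝ c c' : ℝ) := by
      refine Finset.sum_nonneg fun k hk => ?_
      have hk1 : 1 ≤ k := Nat.one_le_iff_ne_zero.mpr (Finset.ne_of_mem_erase hk)
      have hkl : k ≤ l := by
        have := Finset.mem_range.mp (Finset.mem_of_mem_erase hk); omega
      exact mul_nonneg (hfc k hk1 hkl) (hposdef k)
    linarith
  -- upper bound : S ≤ N * F
  have hup : S ≤ N * F := by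
    have hrow : ∀ c ∈ C, ∑ c' ∈ C, (∑ k ∈ Finset.range (l + 1),
        fc k * P k (inner ℝ c c' : ℝ)) ≤ F := by
      intro c hc
      rw [← Finset.add_sum_erase _ _ hc]
      have h1 : (inner ℝ c c : ℝ) = 1 := by
        rw [real_inner_self_eq_norm_sq, hunit c hc]; norm_num
      rw [h1]
      have hrest : ∑ c' ∈ C.erase c, (∑ k ∈ Finset.range (l + 1),
          fc k * P k (inner ℝ c c' : ℝ)) ≤ 0 := by
        refine Finset.sum_nonpos fun c' hc' => ?_
        have hc'C : c' ∈ C := Finset.mem_of_mem_erase hc'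
        have hne : c ≠ c' := fun h => (Finset.ne_of_mem_erase hc') h.symm
        refine hfneg _ ?_ (hsep c hc c' hc'C hne)
        have habs : |(inner ℝ c c' : ℝ)| ≤ 1 := by
          have := abs_real_inner_le_norm c c'
          rwa [hunit c hc, hunit c' hc'C, one_mul] at this
        linarith [neg_abs_le (inner ℝ c c' : ℝ)]
      linarith
    calc S ≤ ∑ _c ∈ C, F := Finset.sum_le_sum hrow
      _ = N * F := by rw [Finset.sum_const, nsmul_eq_mul, hN]
  have key : fc 0 * N ≤ F := by nlinarith
  rw [le_div_iff₀ hf0]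
  nlinarith
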